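/- In U = U_q(sp₄) the following four commutation relations hold (note E_{β₁}* = F₁K₁): F₁K₁E_{β₁} = q²E_{β₁}F₁K₁ − q²(K₁² − 1)/(q − q⁻¹); F₁K₁E_{β₂} = q²E_{β₂}F₁K₁ + q²E_{β₃}; F₁K₁E_{β₃} = E_{β₃}F₁K₁ + [2]_q E_{β₄}; F₁K₁E_{β₄} = q⁻²E_{β₄}F₁K₁. -/

import Mathlib

noncomputable section

open scoped TensorProduct RealInnerProductSpace

/-- The quantum integer `[n]_q = (q^n - q^(-n))/(q - q⁻¹)`. -/
def qnum (q : ℝ) (n : ℤ) : ℝ := (q ^ n - q ^ (-n)) / (q - q⁻¹)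

/-- Generators of `U_q(sp₄)` inside an arbitrary ℝ-algebra `U`, together with the
defining relations of the presented algebra `U_q(sp₄)`. -/
structure Sp4Gens (q : ℝ) (U : Type) [Ring U] [Algebra ℝ U] : Type where
  E1 : U
  E2 : U
  F1 : U
  F2 : U
  K1 : U
  K1i : U
  K2 : U
  K2i : U
  relK1 : K1 * K1i = 1
  relK1' : K1i * K1 = 1
  relK2 : K2 * K2i = 1
  relK2' : K2i * K2 = 1
  relK12 : K1 * K2 = K2 * K1
  relK12i : K1 * K2i = K2i * K1
  relK1i2 : K1i * K2 = K2 * K1i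
  relK1i2i : K1i * K2i = K2i * K1i
  relK1E1 : K1 * E1 = (q ^ (2 : ℤ)) • (E1 * K1)
  relK1E2 : K1 * E2 = (q ^ (-2 : ℤ)) • (E2 * K1)
  relK2E1 : K2 * E1 = (q ^ (-2 : ℤ)) • (E1 * K2)
  relK2E2 : K2 * E2 = (q ^ (4 : ℤ)) • (E2 * K2)
  relK1F1 : K1 * F1 = (q ^ (-2 : ℤ)) • (F1 * K1)
  relK1F2 : K1 * F2 = (q ^ (2 : ℤ)) • (F2 * K1)
  relK2F1 : K2 * F1 = (q ^ (2 : ℤ)) • (F1 * K2)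
  relK2F2 : K2 * F2 = (q ^ (-4 : ℤ)) • (F2 * K2)
  relE1F1 : E1 * F1 - F1 * E1 = (q - q⁻¹)⁻¹ • (K1 - K1i)
  relE2F2 : E2 * F2 - F2 * E2 = (q ^ (2 : ℤ) - q ^ (-2 : ℤ))⁻¹ • (K2 - K2i)
  relE1F2 : E1 * F2 = F2 * E1
  relE2F1 : E2 * F1 = F1 * E2
  serreE1 : E1 ^ 3 * E2 - qnum q 3 • (E1 ^ 2 * E2 * E1) + qnum q 3 • (E1 * E2 * E1 ^ 2)
      - E2 * E1 ^ 3 = 0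
  serreE2 : E2 ^ 2 * E1 - (q ^ (2 : ℤ) + q ^ (-2 : ℤ)) • (E2 * E1 * E2) + E1 * E2 ^ 2 = 0
  serreF1 : F1 ^ 3 * F2 - qnum q 3 • (F1 ^ 2 * F2 * F1) + qnum q 3 • (F1 * F2 * F1 ^ 2)
      - F2 * F1 ^ 3 = 0
  serreF2 : F2 ^ 2 * F1 - (q ^ (2 : ℤ) + q ^ (-2 : ℤ)) • (F2 * F1 * F2) + F1 * F2 ^ 2 = 0

variable {q : ℝ} {U : Type} [Ring U] [Algebra ℝ U]

/-- The quantum root vector `E_{β₁} = E₁`. -/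
def Eb1 (g : Sp4Gens q U) : U := g.E1

/-- The quantum root vector `E_{β₂}`. -/
def Eb2 (g : Sp4Gens q U) : U :=
  (qnum q 2)⁻¹ • (g.E1 ^ 2 * g.E2) - q⁻¹ • (g.E1 * g.E2 * g.E1)
    + (q ^ (-2 : ℤ) * (qnum q 2)⁻¹) • (g.E2 * g.E1 ^ 2)

/-- The quantum root vector `E_{β₃}`. -/
def Eb3 (g : Sp4Gens q U) : U := g.E1 * g.E2 - (q ^ (-2 : ℤ)) • (g.E2 * g.E1)

/-- The quantum root vector `E_{β₄} = E₂`. -/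
def Eb4 (g : Sp4Gens q U) : U := g.E2

/-- `E_{β₁}* = F₁K₁`, the image of `E_{β₁}` under the star anti-automorphism
(the star is the unique ℝ-linear anti-automorphism with `Eᵢ* = FᵢKᵢ`, `Fᵢ* = Kᵢ⁻¹Eᵢ`,
`Kᵢ* = Kᵢ`; on the elements below its value is forced by anti-multiplicativity). -/
def sEb1 (g : Sp4Gens q U) : U := g.F1 * g.K1

/-- `E_{β₂}*`, the image of `E_{β₂}` under the star anti-automorphism. -/
def sEb2 (g : Sp4Gens q U) : U :=
  (qnum q 2)⁻¹ • (g.F2 * g.K2 * (g.F1 * g.K1) ^ 2)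
    - q⁻¹ • (g.F1 * g.K1 * (g.F2 * g.K2) * (g.F1 * g.K1))
    + (q ^ (-2 : ℤ) * (qnum q 2)⁻¹) • ((g.F1 * g.K1) ^ 2 * (g.F2 * g.K2))

/-- `E_{β₃}*`, the image of `E_{β₃}` under the star anti-automorphism. -/
def sEb3 (g : Sp4Gens q U) : U :=
  g.F2 * g.K2 * (g.F1 * g.K1) - (q ^ (-2 : ℤ)) • (g.F1 * g.K1 * (g.F2 * g.K2))

/-- `E_{β₄}* = F₂K₂`, the image of `E_{β₄}` under the star anti-automorphism. -/
def sEb4 (g : Sp4Gens q U) : U := g.F2 * g.K2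

/-- The quantized Levi factor `U_q(𝔩)`, i.e. the unital subalgebra generated by
`E₁, F₁, K₁, K₁⁻¹, K₂, K₂⁻¹`. -/
def Uql (g : Sp4Gens q U) : Subalgebra ℝ U :=
  Algebra.adjoin ℝ {g.E1, g.F1, g.K1, g.K1i, g.K2, g.K2i}

set_option maxHeartbeats 4000000

/-- commutation relations between `E_{β₁}* = F₁K₁` and the quantum
root vectors `E_{βᵢ}`. -/
theorem commutation_sEb1_root_vectors (hq0 : 0 < q) (hq1 : q < 1) (g : Sp4Gens q U) :
    g.F1 * g.K1 * Eb1 g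
        = (q ^ (2 : ℤ)) • (Eb1 g * (g.F1 * g.K1))
          - (q ^ (2 : ℤ) * (q - q⁻¹)⁻¹) • (g.K1 ^ 2 - 1) ∧
      g.F1 * g.K1 * Eb2 g
        = (q ^ (2 : ℤ)) • (Eb2 g * (g.F1 * g.K1)) + (q ^ (2 : ℤ)) • Eb3 g ∧
      g.F1 * g.K1 * Eb3 g = Eb3 g * (g.F1 * g.K1) + qnum q 2 • Eb4 g ∧
      g.F1 * g.K1 * Eb4 g = (q ^ (-2 : ℤ)) • (Eb4 g * (g.F1 * g.K1)) := by

  have hq : q ≠ 0 := ne_of_gt hq0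
  have hinv : 1 < q⁻¹ := (one_lt_inv₀ hq0).mpr hq1
  have hd : q - q⁻¹ ≠ 0 := by nlinarith
  have hs : q + q⁻¹ ≠ 0 := by positivity
  have hz2 : q ^ (2 : ℤ) = q ^ 2 := by
    rw [show ((2:ℤ)) = ((2:ℕ):ℤ) by norm_num, zpow_natCast]
  have hzm2 : q ^ (-2 : ℤ) = (q ^ 2)⁻¹ := by
    rw [zpow_neg, show ((2:ℤ)) = ((2:ℕ):ℤ) by norm_num, zpow_natCast]
  have hm : q ^ 2 - 1 ≠ 0 := by nlinarith
  have hp : q ^ 2 + 1 ≠ 0 := by positivity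
  have hm' : q * q - 1 ≠ 0 := by nlinarith
  have hp' : q * q + 1 ≠ 0 := by positivity
  have hc : (q - q⁻¹)⁻¹ = q / (q ^ 2 - 1) := by
    rw [show q - q⁻¹ = (q ^ 2 - 1) / q by field_simp, inv_div]
  have hc2 : (q + q⁻¹)⁻¹ = q / (q ^ 2 + 1) := by
    rw [show q + q⁻¹ = (q ^ 2 + 1) / q by field_simp, inv_div]
  have h2 : qnum q 2 = q + q⁻¹ := by
    rw [qnum, div_eq_iff hd, show ((2:ℤ)) = ((2:ℕ):ℤ) by norm_num, zpow_neg, zpow_natCast]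
    field_simp
    ring
  -- base and extended commutation relations
  have bF1E1 : g.F1 * g.E1
      = g.E1 * g.F1 - (q - q⁻¹)⁻¹ • g.K1 + (q - q⁻¹)⁻¹ • g.K1i := by
    have h := g.relE1F1
    rw [sub_eq_iff_eq_add] at h
    rw [h]
    module
  have xF1E1 : ∀ x : U, g.F1 * (g.E1 * x)
      = g.E1 * (g.F1 * x) - (q - q⁻¹)⁻¹ • (g.K1 * x)
        + (q - q⁻¹)⁻¹ • (g.K1i * x) := by
    intro x
    rw [← mul_assoc, bF1E1]
    simp only [sub_mul, add_mul, smul_mul_assoc, mul_assoc]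
  have bF1E2 : g.F1 * g.E2 = g.E2 * g.F1 := g.relE2F1.symm
  have xF1E2 : ∀ x : U, g.F1 * (g.E2 * x) = g.E2 * (g.F1 * x) := by
    intro x
    rw [← mul_assoc, bF1E2, mul_assoc]
  have xK1E1 : ∀ x : U, g.K1 * (g.E1 * x) = (q ^ (2 : ℤ)) • (g.E1 * (g.K1 * x)) := by
    intro x
    rw [← mul_assoc, g.relK1E1, smul_mul_assoc, mul_assoc]
  have xK1E2 : ∀ x : U, g.K1 * (g.E2 * x) = (q ^ (-2 : ℤ)) • (g.E2 * (g.K1 * x)) := by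
    intro x
    rw [← mul_assoc, g.relK1E2, smul_mul_assoc, mul_assoc]
  have bK1iE1 : g.K1i * g.E1 = (q ^ (-2 : ℤ)) • (g.E1 * g.K1i) := by
    have h1 : g.K1i * (g.K1 * g.E1) * g.K1i = g.E1 * g.K1i := by
      rw [← mul_assoc, g.relK1', one_mul]
    rw [g.relK1E1] at h1
    simp only [mul_smul_comm, smul_mul_assoc, mul_assoc, g.relK1, mul_one] at h1
    rw [← h1, smul_smul, ← zpow_add₀ hq]
    norm_num
  have bK1iE2 : g.K1i * g.E2 = (q ^ (2 : ℤ)) • (g.E2 * g.K1i) := by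
    have h1 : g.K1i * (g.K1 * g.E2) * g.K1i = g.E2 * g.K1i := by
      rw [← mul_assoc, g.relK1', one_mul]
    rw [g.relK1E2] at h1
    simp only [mul_smul_comm, smul_mul_assoc, mul_assoc, g.relK1, mul_one] at h1
    rw [← h1, smul_smul, ← zpow_add₀ hq]
    norm_num
  have xK1iE1 : ∀ x : U, g.K1i * (g.E1 * x) = (q ^ (-2 : ℤ)) • (g.E1 * (g.K1i * x)) := by
    intro x
    rw [← mul_assoc, bK1iE1, smul_mul_assoc, mul_assoc]
  have xK1iE2 : ∀ x : U, g.K1i * (g.E2 * x) = (q ^ (2 : ℤ)) • (g.E2 * (g.K1i * x)) := by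
    intro x
    rw [← mul_assoc, bK1iE2, smul_mul_assoc, mul_assoc]
  have key : ∀ m n : ℕ, m < n → q ^ n < q ^ m := fun m n h =>
    pow_lt_pow_right_of_lt_one₀ hq0 hq1 h
  have hA1 : (-1 + q ^ 2 : ℝ) ≠ 0 := by have := key 0 2 (by norm_num); intro h; simp at this; nlinarith
  have hA2 : (-q ^ 3 + q ^ 7 : ℝ) ≠ 0 := by have := key 3 7 (by norm_num); intro h; nlinarith
  have hA3 : (-q + q ^ 5 : ℝ) ≠ 0 := by have := key 1 5 (by norm_num); intro h; simp at this; nlinarith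
  have hA4 : (-1 + q ^ 4 : ℝ) ≠ 0 := by have := key 0 4 (by norm_num); intro h; simp at this; nlinarith
  have hA5 : (-q ^ 4 + q ^ 8 : ℝ) ≠ 0 := by have := key 4 8 (by norm_num); intro h; nlinarith
  have hA6 : (-q ^ 6 + q ^ 10 : ℝ) ≠ 0 := by have := key 6 10 (by norm_num); intro h; nlinarith
  have hA7 : (-q ^ 3 + q ^ 5 : ℝ) ≠ 0 := by have := key 3 5 (by norm_num); intro h; nlinarith
  have hA8 : (-q + q ^ 3 : ℝ) ≠ 0 := by have := key 1 3 (by norm_num); intro h; simp at this; nlinarith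
  refine ⟨?_, ?_, ?_, ?_⟩
  · simp only [Eb1, h2, hc, hc2, hz2, hzm2, pow_two, mul_assoc, mul_sub, mul_add, sub_mul, add_mul,
      smul_mul_assoc, mul_smul_comm, smul_sub, smul_add, smul_smul, mul_one, one_mul,
      xK1E1, xK1E2, xF1E1, xF1E2, xK1iE1, xK1iE2, g.relK1E1, g.relK1E2, bF1E1, bF1E2,
      bK1iE1, bK1iE2, g.relK1']
    match_scalars
    all_goals try field_simp
    all_goals try ring
  · simp only [Eb2, Eb3, h2, hc, hc2, hz2, hzm2, pow_two, mul_assoc, mul_sub, mul_add, sub_mul, add_mul,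
      smul_mul_assoc, mul_smul_comm, smul_sub, smul_add, smul_smul, mul_one, one_mul,
      xK1E1, xK1E2, xF1E1, xF1E2, xK1iE1, xK1iE2, g.relK1E1, g.relK1E2, bF1E1, bF1E2,
      bK1iE1, bK1iE2, g.relK1']
    match_scalars
    all_goals try field_simp
    all_goals try ring
  · simp only [Eb3, Eb4, h2, hc, hc2, hz2, hzm2, pow_two, mul_assoc, mul_sub, mul_add, sub_mul, add_mul,
      smul_mul_assoc, mul_smul_comm, smul_sub, smul_add, smul_smul, mul_one, one_mul,
      xK1E1, xK1E2, xF1E1, xF1E2, xK1iE1, xK1iE2, g.relK1E1, g.relK1E2, bF1E1, bF1E2,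
      bK1iE1, bK1iE2, g.relK1']
    match_scalars
    all_goals try field_simp
    all_goals try ring
  · simp only [Eb4, h2, hc, hc2, hz2, hzm2, pow_two, mul_assoc, mul_sub, mul_add, sub_mul, add_mul,
      smul_mul_assoc, mul_smul_comm, smul_sub, smul_add, smul_smul, mul_one, one_mul,
      xK1E1, xK1E2, xF1E1, xF1E2, xK1iE1, xK1iE2, g.relK1E1, g.relK1E2, bF1E1, bF1E2,
      bK1iE1, bK1iE2, g.relK1']
    skip
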